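/- Let a < b ≤ +∞, let s₀ ∈ (a, b), and let h : (a, b) → ℝ be continuously differentiable with h(s) > 0 for all s ∈ (a, b). Then for each w₀ ∈ ℝ there exist ρ > 0 and a twice continuously differentiable function w : (s₀ − ρ, b) → ℝ satisfying w'(s) = (1 + w(s)²)·(1 − h(s)·w(s)) for all s ∈ (s₀ − ρ, b) and w(s₀) = w₀; moreover any two such solutions agree on the intersection of their domains. In particular the forward solution extends to the whole interval [s₀, b). -/

import Mathlib

open Set Filter

open Topology

set_option maxHeartbeats 1000000

noncomputable section

def RicField (h : ℝ → ℝ) (t x : ℝ) : ℝ := (1 + x ^ 2) * (1 - h t * x)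

lemma ricDeriv (a : ℝ) (x : ℝ) :
    HasDerivAt (fun x : ℝ => (1 + x ^ 2) * (1 - a * x))
      (2 * x * (1 - a * x) + (1 + x ^ 2) * (-a)) x := by
  have h1 : HasDerivAt (fun x : ℝ => 1 + x ^ 2) (2 * x) x := by
    simpa using (hasDerivAt_pow 2 x).const_add 1
  have h2 : HasDerivAt (fun x : ℝ => 1 - a * x) (-a) x := by
    simpa using ((hasDerivAt_id x).const_mul a).const_sub 1
  exact h1.mul h2

lemma ricField_lip {h : ℝ → ℝ} {C M : ℝ} (hC : 0 ≤ C) {t : ℝ} (ht : |h t| ≤ C) (hM : 0 ≤ M) :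
    LipschitzOnWith (Real.toNNReal (2 * M * (1 + C * M) + (1 + M ^ 2) * C))
      (fun x : ℝ => (1 + x ^ 2) * (1 - h t * x)) (Icc (-M) M) := by
  apply (convex_Icc _ _).lipschitzOnWith_of_nnnorm_hasDerivWithin_le
    (f' := fun x => 2 * x * (1 - h t * x) + (1 + x ^ 2) * (-(h t)))
  · intro x _
    exact (ricDeriv (h t) x).hasDerivWithinAt
  · intro x hx
    rw [← NNReal.coe_le_coe, coe_nnnorm, Real.coe_toNNReal _ (by positivity)]
    rw [mem_Icc] at hx
    have hx' : |x| ≤ M := abs_le.2 hx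
    have h1 : |2 * x * (1 - h t * x)| ≤ 2 * M * (1 + C * M) := by
      rw [abs_mul, abs_mul]
      have e1 : |(2:ℝ)| = 2 := by norm_num
      have e2 : |1 - h t * x| ≤ 1 + C * M := by
        calc |1 - h t * x| ≤ |(1:ℝ)| + |h t * x| := abs_sub _ _
        _ ≤ 1 + C * M := by
            rw [abs_one, abs_mul]
            have := mul_le_mul ht hx' (abs_nonneg x) hC
            linarith
      rw [e1]
      have hCM : (0:ℝ) ≤ 1 + C * M := by positivity
      nlinarith [abs_nonneg x, abs_nonneg (1 - h t * x)]
    have h2 : |(1 + x ^ 2) * (-(h t))| ≤ (1 + M ^ 2) * C := by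
      rw [abs_mul, abs_neg]
      have e3 : |1 + x ^ 2| = 1 + x ^ 2 := abs_of_nonneg (by positivity)
      rw [e3]
      have hx2 : x ^ 2 ≤ M ^ 2 := by nlinarith [abs_nonneg x, sq_abs x]
      nlinarith [abs_nonneg (h t)]
    calc ‖2 * x * (1 - h t * x) + (1 + x ^ 2) * (-(h t))‖
        ≤ |2 * x * (1 - h t * x)| + |(1 + x ^ 2) * (-(h t))| := abs_add_le _ _
      _ ≤ 2 * M * (1 + C * M) + (1 + M ^ 2) * C := add_le_add h1 h2

lemma loc_uniq {h f g : ℝ → ℝ} {c : ℝ}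
    (hf : ∀ᶠ t in 𝓝 c, HasDerivAt f (RicField h t (f t)) t)
    (hg : ∀ᶠ t in 𝓝 c, HasDerivAt g (RicField h t (g t)) t)
    (hb : ∃ C, ∀ᶠ t in 𝓝[≠] c, |h t| ≤ C)
    (heq : f c = g c) : f =ᶠ[𝓝 c] g := by
  obtain ⟨C₀, hC₀⟩ := hb
  set C := max C₀ 0 with hCdef
  have hC : 0 ≤ C := le_max_right _ _
  have hC' : ∀ᶠ t in 𝓝[≠] c, |h t| ≤ C := hC₀.mono fun t ht => le_trans ht (le_max_left _ _)
  have hfc : ContinuousAt f c := (hf.self_of_nhds).continuousAt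
  have hgc : ContinuousAt g c := (hg.self_of_nhds).continuousAt
  set M := |f c| + 1 with hMdef
  have hM0 : (0:ℝ) ≤ M := by positivity
  have hfM : ∀ᶠ t in 𝓝 c, |f t| ≤ M := by
    filter_upwards [Metric.tendsto_nhds.mp hfc 1 one_pos] with t ht
    rw [Real.dist_eq] at ht
    calc |f t| = |f c + (f t - f c)| := by ring_nf
      _ ≤ |f c| + |f t - f c| := abs_add_le _ _
      _ ≤ M := by rw [hMdef]; linarith
  have hgM : ∀ᶠ t in 𝓝 c, |g t| ≤ M := by
    filter_upwards [Metric.tendsto_nhds.mp hgc 1 one_pos] with t ht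
    rw [Real.dist_eq] at ht
    calc |g t| = |g c + (g t - g c)| := by ring_nf
      _ ≤ |g c| + |g t - g c| := abs_add_le _ _
      _ ≤ M := by rw [hMdef, heq]; linarith
  have big : ∀ᶠ t in 𝓝[≠] c,
      (HasDerivAt f (RicField h t (f t)) t ∧ HasDerivAt g (RicField h t (g t)) t ∧
        |f t| ≤ M ∧ |g t| ≤ M) ∧ |h t| ≤ C :=
    (((hf.and (hg.and (hfM.and hgM))).filter_mono nhdsWithin_le_nhds).and hC')
  rw [eventually_nhdsWithin_iff] at big
  obtain ⟨ε, hε, hball⟩ := Metric.eventually_nhds_iff.mp big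
  classical
  set v' : ℝ → ℝ → ℝ := fun t x =>
    if t = c then RicField h c (f c) else if dist t c < ε then RicField h t x else 0 with hv'def
  set K := Real.toNNReal (2 * M * (1 + C * M) + (1 + M ^ 2) * C) with hKdef
  have hv : ∀ t, LipschitzOnWith K (v' t) (Icc (-M) M) := by
    intro t
    by_cases h1 : t = c
    · have : v' t = fun _ => RicField h c (f c) := by funext x; simp [hv'def, h1]
      rw [this]
      exact ((LipschitzWith.const _).weaken zero_le).lipschitzOnWith
    · by_cases h2 : dist t c < ε
      · have hbt : |h t| ≤ C := (hball h2 h1).2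
        have : v' t = fun x => (1 + x ^ 2) * (1 - h t * x) := by
          funext x; simp [hv'def, h1, h2, RicField]
        rw [this]
        exact ricField_lip hC hbt hM0
      · have : v' t = fun _ => (0:ℝ) := by funext x; simp [hv'def, h1, h2]
        rw [this]
        exact ((LipschitzWith.const _).weaken zero_le).lipschitzOnWith
  have hmemf : ∀ᶠ t in 𝓝 c, HasDerivAt f (v' t (f t)) t ∧ f t ∈ Icc (-M) M := by
    filter_upwards [Metric.ball_mem_nhds c hε] with t ht
    rw [Metric.mem_ball] at ht
    by_cases htc : t = c
    · subst htc
      refine ⟨?_, ?_⟩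
      · simpa [hv'def] using hf.self_of_nhds
      · have : |f t| ≤ M := by rw [hMdef]; linarith [abs_nonneg (f t)]
        exact abs_le.1 this
    · obtain ⟨⟨d1, _, m1, _⟩, _⟩ := hball ht htc
      refine ⟨?_, abs_le.1 m1⟩
      simpa [hv'def, htc, ht] using d1
  have hmemg : ∀ᶠ t in 𝓝 c, HasDerivAt g (v' t (g t)) t ∧ g t ∈ Icc (-M) M := by
    filter_upwards [Metric.ball_mem_nhds c hε] with t ht
    rw [Metric.mem_ball] at ht
    by_cases htc : t = c
    · subst htc
      refine ⟨?_, ?_⟩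
      · have hgs := hg.self_of_nhds
        have hve : v' t (g t) = RicField h t (f t) := by simp [hv'def]
        rw [hve, heq]
        exact hgs
      · have : |g t| ≤ M := by rw [hMdef, heq]; linarith [abs_nonneg (g t)]
        exact abs_le.1 this
    · obtain ⟨⟨_, d2, _, m2⟩, _⟩ := hball ht htc
      refine ⟨?_, abs_le.1 m2⟩
      simpa [hv'def, htc, ht] using d2
  exact ODE_solution_unique_of_eventually (Filter.Eventually.of_forall hv) hmemf hmemg heq

/-- Propagation of equality along a preconnected open set. -/
lemma eqOn_of_loc {f g : ℝ → ℝ} {I : Set ℝ} (hI : IsPreconnected I) (hIo : IsOpen I)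
    (hf : ContinuousOn f I) (hg : ContinuousOn g I)
    (hloc : ∀ c ∈ I, f c = g c → f =ᶠ[𝓝 c] g)
    {c₀ : ℝ} (hc₀ : c₀ ∈ I) (heq : f c₀ = g c₀) : EqOn f g I := by
  set A : Set ℝ := {t | t ∈ I ∧ f t = g t} with hA
  set B : Set ℝ := {t | t ∈ I ∧ f t ≠ g t} with hB
  have hAo : IsOpen A := by
    rw [isOpen_iff_mem_nhds]
    rintro t ⟨htI, hteq⟩
    filter_upwards [hIo.mem_nhds htI, hloc t htI hteq] with u hu1 hu2
    exact ⟨hu1, hu2⟩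
  have hBo : IsOpen B := by
    rw [isOpen_iff_mem_nhds]
    rintro t ⟨htI, htne⟩
    have hft : ContinuousAt f t := hf.continuousAt (hIo.mem_nhds htI)
    have hgt : ContinuousAt g t := hg.continuousAt (hIo.mem_nhds htI)
    filter_upwards [hIo.mem_nhds htI, (hft.sub hgt).eventually_ne (sub_ne_zero.2 htne)]
      with u hu1 hu2
    exact ⟨hu1, sub_ne_zero.1 hu2⟩
  have hsub : I ⊆ A ∪ B := by
    intro t ht
    by_cases h : f t = g t
    · exact Or.inl ⟨ht, h⟩
    · exact Or.inr ⟨ht, h⟩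
  have hdisj : Disjoint A B := by
    rw [Set.disjoint_iff]
    rintro t ⟨⟨_, h1⟩, ⟨_, h2⟩⟩
    exact absurd h1 h2
  rcases hI.subset_or_subset hAo hBo hdisj hsub with hIA | hIB
  · exact fun t ht => (hIA ht).2
  · exact absurd ((hIB hc₀).2) (not_not.2 heq)

lemma hbound_of_continuousAt {h : ℝ → ℝ} {c : ℝ} (hc : ContinuousAt h c) :
    ∃ C, ∀ᶠ t in 𝓝[≠] c, |h t| ≤ C := by
  refine ⟨|h c| + 1, ?_⟩
  have : ∀ᶠ t in 𝓝 c, |h t| ≤ |h c| + 1 := by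
    filter_upwards [Metric.tendsto_nhds.mp hc 1 one_pos] with t ht
    rw [Real.dist_eq] at ht
    calc |h t| = |h c + (h t - h c)| := by ring_nf
      _ ≤ |h c| + |h t - h c| := abs_add_le _ _
      _ ≤ |h c| + 1 := by linarith
  exact this.filter_mono nhdsWithin_le_nhds

/-- Along a C² solution, `h` is locally bounded (even where `h` is not continuous). -/
lemma hbound_of_sol {h f : ℝ → ℝ} {c : ℝ}
    (hf : ∀ᶠ t in 𝓝 c, HasDerivAt f (RicField h t (f t)) t)
    (hf2 : ContDiffAt ℝ 2 f c) :
    ∃ C, ∀ᶠ t in 𝓝[≠] c, |h t| ≤ C := by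
  -- deriv f is C¹ (hence continuous and differentiable) near c
  obtain ⟨u, hu, hcd⟩ := hf2.contDiffOn (le_refl 2) (by simp)
  have hco : c ∈ interior u := mem_interior_iff_mem_nhds.2 hu
  have hcd' : ContDiffOn ℝ 2 f (interior u) := hcd.mono interior_subset
  have hder : ContDiffOn ℝ 1 (deriv f) (interior u) := by
    have h2 : (2 : WithTop ℕ∞) = 1 + 1 := by norm_num
    rw [h2, contDiffOn_succ_iff_deriv_of_isOpen isOpen_interior] at hcd'
    exact hcd'.2.2
  have hdc : ContDiffAt ℝ 1 (deriv f) c :=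
    hder.contDiffAt (isOpen_interior.mem_nhds hco)
  have hdiffd : DifferentiableAt ℝ (deriv f) c := hdc.differentiableAt one_ne_zero
  have hfd : DifferentiableAt ℝ f c := hf.self_of_nhds.differentiableAt
  set N : ℝ → ℝ := fun t => (1 + f t ^ 2) - deriv f t with hNdef
  have hNdiff : DifferentiableAt ℝ N c := by
    apply DifferentiableAt.sub
    · exact (differentiableAt_const _).add (hfd.pow 2)
    · exact hdiffd
  have key : ∀ᶠ t in 𝓝 c, |h t| * |f t| ≤ |N t| := by
    filter_upwards [hf] with t ht
    have hd : deriv f t = RicField h t (f t) := ht.deriv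
    have hN : N t = (1 + f t ^ 2) * (h t * f t) := by
      simp only [hNdef]; rw [hd]; unfold RicField; ring
    rw [hN, abs_mul, abs_mul]
    have h1 : |1 + f t ^ 2| = 1 + f t ^ 2 := abs_of_pos (by positivity)
    rw [h1]
    nlinarith [abs_nonneg (h t), abs_nonneg (f t), sq_nonneg (f t), mul_nonneg (abs_nonneg (h t)) (abs_nonneg (f t))]
  by_cases hfc : f c = 0
  · -- f c = 0 : then f'(c) = 1, N(c) = 0, N is Lipschitz-small, |f| ≥ |t-c|/2
    have hd1 : HasDerivAt f 1 c := by
      have := hf.self_of_nhds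
      simpa [RicField, hfc] using this
    have hNc : N c = 0 := by simp [hNdef, hfc, hd1.deriv]
    obtain ⟨d, hNd⟩ : ∃ d, HasDerivAt N d c := ⟨deriv N c, hNdiff.hasDerivAt⟩
    have hNslope := hasDerivAt_iff_tendsto_slope.mp hNd
    have hfslope := hasDerivAt_iff_tendsto_slope.mp hd1
    refine ⟨2 * (|d| + 1), ?_⟩
    have e1 : ∀ᶠ t in 𝓝[≠] c, |slope N c t| < |d| + 1 :=
      (hNslope.abs).eventually_lt_const (by linarith [abs_nonneg d] : |d| < |d| + 1)
    have e2 : ∀ᶠ t in 𝓝[≠] c, (1:ℝ)/2 < slope f c t :=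
      hfslope.eventually_const_lt (by norm_num)
    have e3 : ∀ᶠ t in 𝓝[≠] c, |h t| * |f t| ≤ |N t| := key.filter_mono nhdsWithin_le_nhds
    filter_upwards [e1, e2, e3, eventually_mem_nhdsWithin] with t h1 h2 h3 (h4 : t ≠ c)
    have htc : (0:ℝ) < |t - c| := abs_pos.2 (sub_ne_zero.2 h4)
    -- |N t| ≤ (|d|+1) * |t - c|
    have hN1 : |N t| ≤ (|d| + 1) * |t - c| := by
      have : slope N c t = (N t - N c) / (t - c) := slope_def_field N c t
      rw [this, hNc, sub_zero, abs_div] at h1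
      rw [div_lt_iff₀ htc] at h1
      linarith
    -- |f t| ≥ |t - c| / 2
    have hf1 : (1:ℝ)/2 * |t - c| ≤ |f t| := by
      have hs : slope f c t = (f t - f c) / (t - c) := slope_def_field f c t
      rw [hs, hfc, sub_zero] at h2
      have habs : (1:ℝ)/2 ≤ |f t| / |t - c| := by
        rw [← abs_div]; exact le_trans h2.le (le_abs_self _)
      rw [le_div_iff₀ htc] at habs
      linarith
    nlinarith [abs_nonneg (h t), mul_le_mul_of_nonneg_left hf1 (abs_nonneg (h t))]
  · -- f c ≠ 0
    have hNcont : ContinuousAt N c := hNdiff.continuousAt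
    have hfcont : ContinuousAt f c := hfd.continuousAt
    have hfc2 : 0 < |f c| / 2 := by positivity
    refine ⟨(|N c| + 1) / (|f c| / 2), ?_⟩
    have e1 : ∀ᶠ t in 𝓝 c, |f c| / 2 ≤ |f t| := by
      filter_upwards [Metric.tendsto_nhds.mp hfcont (|f c| / 2) hfc2] with t ht
      rw [Real.dist_eq] at ht
      have := abs_sub_abs_le_abs_sub (f c) (f t)
      rw [abs_sub_comm (f c) (f t)] at this
      linarith
    have e2 : ∀ᶠ t in 𝓝 c, |N t| ≤ |N c| + 1 := by
      filter_upwards [Metric.tendsto_nhds.mp hNcont 1 one_pos] with t ht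
      rw [Real.dist_eq] at ht
      have := abs_sub_abs_le_abs_sub (N t) (N c)
      linarith
    have e4 : ∀ᶠ t in 𝓝 c, |h t| ≤ (|N c| + 1) / (|f c| / 2) := by
      filter_upwards [e1, e2, key] with t h1 h2 h3
      rw [le_div_iff₀ hfc2]
      nlinarith [abs_nonneg (h t), mul_le_mul_of_nonneg_left h1 (abs_nonneg (h t))]
    exact e4.filter_mono nhdsWithin_le_nhds

lemma apriori {h f : ℝ → ℝ} {s₀ T δ w₀ : ℝ} (hδ : 0 < δ)
    (hhδ : ∀ t ∈ Icc s₀ T, δ ≤ h t) (hf0 : f s₀ = w₀)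
    (hf : ∀ t ∈ Icc s₀ T, HasDerivAt f (RicField h t (f t)) t) :
    ∀ t ∈ Icc s₀ T, min w₀ 0 - 1 ≤ f t ∧ f t ≤ max w₀ (1/δ) + 1 := by
  have hcont : ContinuousOn f (Icc s₀ T) := fun t ht =>
    ((hf t ht).continuousAt).continuousWithinAt
  have upper : ∀ t ∈ Icc s₀ T, f t ≤ max w₀ (1/δ) + 1 := by
    set M := max w₀ (1/δ) + 1 with hMdef
    by_contra hcon
    push_neg at hcon
    obtain ⟨t₀, ht₀, ht₀M⟩ := hcon
    set A := {t | t ∈ Icc s₀ T ∧ M ≤ f t} with hA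
    have hAne : A.Nonempty := ⟨t₀, ht₀, ht₀M.le⟩
    have hAeq : A = Icc s₀ T ∩ f ⁻¹' (Ici M) := by ext t; simp [hA]
    have hAclosed : IsClosed A := by
      rw [hAeq]
      exact hcont.preimage_isClosed_of_isClosed isClosed_Icc isClosed_Ici
    have hAbdd : BddBelow A := ⟨s₀, fun t ht => ht.1.1⟩
    set t₁ := sInf A with ht₁def
    have ht₁A : t₁ ∈ A := hAclosed.csInf_mem hAne hAbdd
    have ht₁Icc : t₁ ∈ Icc s₀ T := ht₁A.1
    have hs₀M : f s₀ < M := by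
      rw [hf0, hMdef]; linarith [le_max_left w₀ (1/δ)]
    have hs₀t₁ : s₀ < t₁ := by
      rcases lt_or_eq_of_le ht₁Icc.1 with h | h
      · exact h
      · exfalso; rw [← h] at ht₁A; linarith [ht₁A.2]
    have hlt : ∀ t, t ∈ Icc s₀ T → t < t₁ → f t < M := by
      intro t ht htl
      by_contra hge
      exact absurd (csInf_le hAbdd ⟨ht, not_lt.1 hge⟩) (not_le.2 htl)
    have hft₁ : 1/δ < f t₁ := by
      have := ht₁A.2
      rw [hMdef] at this
      linarith [le_max_right w₀ (1/δ)]
    have hft₁pos : 0 < f t₁ := lt_trans (by positivity) hft₁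
    have hht₁ : δ ≤ h t₁ := hhδ _ ht₁Icc
    have hd : RicField h t₁ (f t₁) < 0 := by
      unfold RicField
      apply mul_neg_of_pos_of_neg (by positivity)
      have h1 : 1 < δ * f t₁ := by
        rw [div_lt_iff₀ hδ] at hft₁; linarith
      have h2 : δ * f t₁ ≤ h t₁ * f t₁ := mul_le_mul_of_nonneg_right hht₁ hft₁pos.le
      linarith
    have hslope := hasDerivAt_iff_tendsto_slope.mp (hf t₁ ht₁Icc)
    have hev1 : ∀ᶠ t in 𝓝[<] t₁, slope f t₁ t < 0 :=
      (hslope.mono_left (nhdsWithin_mono _ fun x hx => (Set.mem_compl_singleton_iff).2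
        (ne_of_lt hx))).eventually_lt_const hd
    have hev2 : Ioo s₀ t₁ ∈ 𝓝[<] t₁ := Ioo_mem_nhdsLT_of_mem ⟨hs₀t₁, le_refl _⟩
    have hev2' : ∀ᶠ t in 𝓝[<] t₁, t ∈ Ioo s₀ t₁ := hev2
    obtain ⟨t, hts, htI⟩ := (hev1.and hev2').exists
    have h3 : f t < M := hlt t ⟨htI.1.le, htI.2.le.trans ht₁Icc.2⟩ htI.2
    rw [slope_def_field, div_neg_iff] at hts
    rcases hts with ⟨hp, hn⟩ | ⟨hn, hp⟩
    · linarith [ht₁A.2]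
    · linarith [htI.2]
  have lower : ∀ t ∈ Icc s₀ T, min w₀ 0 - 1 ≤ f t := by
    set m := min w₀ 0 - 1 with hmdef
    by_contra hcon
    push_neg at hcon
    obtain ⟨t₀, ht₀, ht₀m⟩ := hcon
    set A := {t | t ∈ Icc s₀ T ∧ f t ≤ m} with hA
    have hAne : A.Nonempty := ⟨t₀, ht₀, ht₀m.le⟩
    have hAeq : A = Icc s₀ T ∩ f ⁻¹' (Iic m) := by ext t; simp [hA]
    have hAclosed : IsClosed A := by
      rw [hAeq]
      exact hcont.preimage_isClosed_of_isClosed isClosed_Icc isClosed_Iic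
    have hAbdd : BddBelow A := ⟨s₀, fun t ht => ht.1.1⟩
    set t₁ := sInf A with ht₁def
    have ht₁A : t₁ ∈ A := hAclosed.csInf_mem hAne hAbdd
    have ht₁Icc : t₁ ∈ Icc s₀ T := ht₁A.1
    have hs₀m : m < f s₀ := by
      rw [hf0, hmdef]; linarith [min_le_left w₀ 0]
    have hs₀t₁ : s₀ < t₁ := by
      rcases lt_or_eq_of_le ht₁Icc.1 with h | h
      · exact h
      · exfalso; rw [← h] at ht₁A; linarith [ht₁A.2]
    have hlt : ∀ t, t ∈ Icc s₀ T → t < t₁ → m < f t := by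
      intro t ht htl
      by_contra hge
      exact absurd (csInf_le hAbdd ⟨ht, not_lt.1 hge⟩) (not_le.2 htl)
    have hft₁neg : f t₁ < 0 := by
      have := ht₁A.2; rw [hmdef] at this; linarith [min_le_right w₀ 0]
    have hht₁ : δ ≤ h t₁ := hhδ _ ht₁Icc
    have hd : 0 < RicField h t₁ (f t₁) := by
      unfold RicField
      apply mul_pos (by positivity)
      nlinarith
    have hslope := hasDerivAt_iff_tendsto_slope.mp (hf t₁ ht₁Icc)
    have hev1 : ∀ᶠ t in 𝓝[<] t₁, 0 < slope f t₁ t :=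
      (hslope.mono_left (nhdsWithin_mono _ fun x hx => (Set.mem_compl_singleton_iff).2
        (ne_of_lt hx))).eventually_const_lt hd
    have hev2 : Ioo s₀ t₁ ∈ 𝓝[<] t₁ := Ioo_mem_nhdsLT_of_mem ⟨hs₀t₁, le_refl _⟩
    have hev2' : ∀ᶠ t in 𝓝[<] t₁, t ∈ Ioo s₀ t₁ := hev2
    obtain ⟨t, hts, htI⟩ := (hev1.and hev2').exists
    have h3 : m < f t := hlt t ⟨htI.1.le, htI.2.le.trans ht₁Icc.2⟩ htI.2
    rw [slope_def_field, div_pos_iff] at hts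
    rcases hts with ⟨hp, hn⟩ | ⟨hn, hp⟩
    · linarith [htI.2]
    · linarith [ht₁A.2]
  exact fun t ht => ⟨lower t ht, upper t ht⟩

lemma loc_ex {h : ℝ → ℝ} {U : Set ℝ} (hU : IsOpen U) (hC1 : ContDiffOn ℝ 1 h U)
    {c x₀ : ℝ} (hc : c ∈ U) :
    ∃ ε > (0:ℝ), Ioo (c - ε) (c + ε) ⊆ U ∧
      ∃ f : ℝ → ℝ, f c = x₀ ∧ ∀ t ∈ Ioo (c - ε) (c + ε), HasDerivAt f (RicField h t (f t)) t := by
  set F : ℝ × ℝ → ℝ × ℝ := fun p => (1, (1 + p.2 ^ 2) * (1 - h p.1 * p.2)) with hFdef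
  have hhc : ContDiffAt ℝ 1 h c := hC1.contDiffAt (hU.mem_nhds hc)
  have hh : ContDiffAt ℝ 1 (fun p : ℝ × ℝ => h p.1) (c, x₀) := hhc.comp (c, x₀) contDiffAt_fst
  have hF : ContDiffAt ℝ 1 F (c, x₀) := by
    apply ContDiffAt.prodMk contDiffAt_const
    exact (contDiffAt_const.add (contDiffAt_snd.pow 2)).mul
      (contDiffAt_const.sub (hh.mul contDiffAt_snd))
  obtain ⟨α, hα0, ε₀, hε₀, hα⟩ := ContDiffAt.exists_forall_mem_closedBall_exists_eq_forall_mem_Ioo_hasDerivAt₀ (x₀ := (c, x₀)) hF c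
  -- components
  have hfst : ∀ t ∈ Ioo (c - ε₀) (c + ε₀), HasDerivAt (fun s => (α s).1) 1 t := by
    intro t ht
    have := (ContinuousLinearMap.fst ℝ ℝ ℝ).hasFDerivAt.comp_hasDerivAt t (hα t ht)
    exact this.congr_deriv (by simp [hFdef])
  have hsnd : ∀ t ∈ Ioo (c - ε₀) (c + ε₀),
      HasDerivAt (fun s => (α s).2) ((1 + (α t).2 ^ 2) * (1 - h (α t).1 * (α t).2)) t := by
    intro t ht
    have := (ContinuousLinearMap.snd ℝ ℝ ℝ).hasFDerivAt.comp_hasDerivAt t (hα t ht)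
    exact this.congr_deriv (by simp [hFdef])
  -- the first component is the identity
  have hid : ∀ t ∈ Ioo (c - ε₀) (c + ε₀), (α t).1 = t := by
    have hg : ∀ t ∈ Ioo (c - ε₀) (c + ε₀), HasDerivAt (fun s => (α s).1 - s) 0 t := by
      intro t ht
      exact ((hfst t ht).sub (hasDerivAt_id' t)).congr_deriv (by ring)
    have hc0 : (α c).1 - c = 0 := by rw [hα0]; simp
    have hcIoo : c ∈ Ioo (c - ε₀) (c + ε₀) := by constructor <;> linarith
    intro t ht
    rcases le_or_gt c t with hct | htc
    · have hsub : Icc c t ⊆ Ioo (c - ε₀) (c + ε₀) := fun u hu =>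
        ⟨by linarith [hu.1, hcIoo.1], by linarith [hu.2, ht.2]⟩
      have := constant_of_has_deriv_right_zero
        (fun u hu => ((hg u (hsub hu)).continuousAt).continuousWithinAt)
        (fun u hu => ((hg u (hsub (Ico_subset_Icc_self hu))).hasDerivWithinAt)) t
        ⟨hct, le_refl t⟩
      linarith [this, hc0]
    · have hsub : Icc t c ⊆ Ioo (c - ε₀) (c + ε₀) := fun u hu =>
        ⟨by linarith [hu.1, ht.1], by linarith [hu.2, hcIoo.2]⟩
      have := constant_of_has_deriv_right_zero
        (fun u hu => ((hg u (hsub hu)).continuousAt).continuousWithinAt)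
        (fun u hu => ((hg u (hsub (Ico_subset_Icc_self hu))).hasDerivWithinAt)) c
        ⟨htc.le, le_refl c⟩
      linarith [this, hc0]
  -- shrink to stay in U
  obtain ⟨r, hr, hball⟩ := Metric.isOpen_iff.mp hU c hc
  refine ⟨min ε₀ (r / 2), by positivity, ?_, fun t => (α t).2, by simp [hα0], ?_⟩
  · intro t ht
    apply hball
    rw [Metric.mem_ball, Real.dist_eq, abs_lt]
    have h1 := ht.1; have h2 := ht.2
    have := min_le_right ε₀ (r / 2)
    constructor <;> nlinarith [hr]
  · intro t ht
    have htI : t ∈ Ioo (c - ε₀) (c + ε₀) := by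
      have := min_le_left ε₀ (r / 2)
      exact ⟨by linarith [ht.1], by linarith [ht.2]⟩
    have := hsnd t htI
    rw [hid t htI] at this
    exact this

lemma good_uniq {h : ℝ → ℝ} {I : Set ℝ} (hI : IsPreconnected I) (hIo : IsOpen I)
    (hcont : ∀ c ∈ I, ContinuousAt h c)
    {f g : ℝ → ℝ} (hf : ∀ t ∈ I, HasDerivAt f (RicField h t (f t)) t)
    (hg : ∀ t ∈ I, HasDerivAt g (RicField h t (g t)) t)
    {c₀ : ℝ} (hc₀ : c₀ ∈ I) (heq : f c₀ = g c₀) : EqOn f g I := by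
  apply eqOn_of_loc hI hIo
    (fun t ht => ((hf t ht).continuousAt).continuousWithinAt)
    (fun t ht => ((hg t ht).continuousAt).continuousWithinAt) ?_ hc₀ heq
  intro c hc hceq
  have hev : ∀ᶠ t in 𝓝 c, t ∈ I := hIo.mem_nhds hc
  exact loc_uniq (hev.mono fun t ht => hf t ht) (hev.mono fun t ht => hg t ht)
    (hbound_of_continuousAt (hcont c hc)) hceq

/-- Structure of the upper cut determined by `b : EReal`. -/
lemma ereal_next {b : EReal} {T : ℝ} (h : (T : EReal) < b) :
    ∃ T' : ℝ, T < T' ∧ (T' : EReal) < b := by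
  obtain ⟨z, hz1, hz2⟩ := exists_between h
  have hzt : z ≠ ⊤ := (lt_of_lt_of_le hz2 le_top).ne
  have hzb : z ≠ ⊥ := (lt_trans (Ne.bot_lt (by simp)) hz1).ne'
  refine ⟨z.toReal, ?_, ?_⟩
  · rw [← EReal.coe_lt_coe_iff, EReal.coe_toReal hzt hzb]; exact hz1
  · rw [EReal.coe_toReal hzt hzb]; exact hz2

lemma ereal_open (b : EReal) : IsOpen {s : ℝ | (s : EReal) < b} :=
  isOpen_Iio.preimage continuous_coe_real_ereal

lemma global_ex {a : ℝ} {b : EReal} {h : ℝ → ℝ} {s₀ w₀ : ℝ}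
    (hs₀a : a < s₀) (hs₀b : (s₀ : EReal) < b)
    (hC1 : ContDiffOn ℝ 1 h {s : ℝ | a < s ∧ (s : EReal) < b})
    (hpos : ∀ s : ℝ, a < s → (s : EReal) < b → 0 < h s) :
    ∃ ρ > (0:ℝ), a < s₀ - ρ ∧ ∃ w : ℝ → ℝ, w s₀ = w₀ ∧
      ∀ s : ℝ, s₀ - ρ < s → (s : EReal) < b → HasDerivAt w (RicField h s (w s)) s := by
  classical
  set U : Set ℝ := {s : ℝ | a < s ∧ (s : EReal) < b} with hUdef
  have hUo : IsOpen U := by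
    have h1 : U = Ioi a ∩ {s : ℝ | (s : EReal) < b} := by ext t; simp only [hUdef, mem_Ioi, mem_inter_iff, mem_setOf_eq]
    rw [h1]; exact isOpen_Ioi.inter (ereal_open b)
  have hcontU : ∀ c ∈ U, ContinuousAt h c := fun c hc =>
    (hC1.continuousOn).continuousAt (hUo.mem_nhds hc)
  have hs₀U : s₀ ∈ U := ⟨hs₀a, hs₀b⟩
  set S : Set ℝ := {T | s₀ ≤ T ∧ (T : EReal) < b ∧ ∃ ε, 0 < ε ∧ Ioo (s₀ - ε) (T + ε) ⊆ U ∧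
    ∃ f : ℝ → ℝ, f s₀ = w₀ ∧ ∀ t ∈ Ioo (s₀ - ε) (T + ε),
      HasDerivAt f (RicField h t (f t)) t} with hSdef
  have down : ∀ T T', T ∈ S → s₀ ≤ T' → T' ≤ T → T' ∈ S := by
    rintro T T' ⟨h1, h2, ε, hε, hsub, f, hf0, hf'⟩ h3 h4
    refine ⟨h3, lt_of_le_of_lt (EReal.coe_le_coe_iff.2 h4) h2, ε, hε, ?_, f, hf0, ?_⟩
    · exact fun u hu => hsub ⟨hu.1, by linarith [hu.2]⟩
    · exact fun u hu => hf' u ⟨hu.1, by linarith [hu.2]⟩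
  -- local existence at s₀
  obtain ⟨ε₁, hε₁, hsub₁, f₁, hf₁0, hf₁'⟩ := loc_ex hUo hC1 hs₀U (x₀ := w₀)
  have hS0 : s₀ ∈ S := ⟨le_refl _, hs₀b, ε₁, hε₁, hsub₁, f₁, hf₁0, hf₁'⟩
  have hT₁S : s₀ + ε₁/2 ∈ S := by
    have hT₁U : s₀ + ε₁/2 ∈ U := hsub₁ ⟨by linarith, by linarith⟩
    refine ⟨by linarith, hT₁U.2, ε₁/2, by linarith, ?_, f₁, hf₁0, ?_⟩
    · intro t ht; exact hsub₁ ⟨by linarith [ht.1], by linarith [ht.2]⟩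
    · intro t ht; exact hf₁' t ⟨by linarith [ht.1], by linarith [ht.2]⟩
  -- KEY: every admissible T is in S
  have key : ∀ T, s₀ ≤ T → (T : EReal) < b → T ∈ S := by
    by_contra hcon
    push_neg at hcon
    obtain ⟨T₀, hT₀1, hT₀2, hT₀3⟩ := hcon
    set Cset : Set ℝ := {T | s₀ ≤ T ∧ (T : EReal) < b ∧ T ∉ S} with hCsetdef
    have hCne : Cset.Nonempty := ⟨T₀, hT₀1, hT₀2, hT₀3⟩
    have hCbdd : BddBelow Cset := ⟨s₀, fun T hT => hT.1⟩
    set c := sInf Cset with hcdef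
    have hcs₀ : s₀ ≤ c := le_csInf hCne fun T hT => hT.1
    have hCne2 := hCne
    obtain ⟨Tc, hTc⟩ := hCne2
    have hcb : (c : EReal) < b :=
      lt_of_le_of_lt (EReal.coe_le_coe_iff.2 (csInf_le hCbdd hTc)) hTc.2.1
    have hbelow : ∀ T, s₀ ≤ T → T < c → T ∈ S := by
      intro T h1 h2
      by_contra h3
      have hTb : (T : EReal) < b := lt_trans (EReal.coe_lt_coe_iff.2 h2) hcb
      exact absurd (csInf_le hCbdd ⟨h1, hTb, h3⟩) (not_le.2 h2)
    have hs₀c : s₀ < c := by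
      have h5 : ∀ T ∈ Cset, s₀ + ε₁/2 ≤ T := by
        intro T hT
        by_contra hle
        push_neg at hle
        exact hT.2.2 (down _ _ hT₁S hT.1 hle.le)
      have h6 := le_csInf hCne h5
      linarith
    have hIccU : Icc s₀ c ⊆ U := fun t ht =>
      ⟨lt_of_lt_of_le hs₀a ht.1, lt_of_le_of_lt (EReal.coe_le_coe_iff.2 ht.2) hcb⟩
    -- minimum of h and maximum of |h| on [s₀, c]
    obtain ⟨tm, htm, htmin⟩ := isCompact_Icc.exists_isMinOn (nonempty_Icc.2 hcs₀)
      ((hC1.continuousOn).mono hIccU)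
    set δ := h tm with hδdef
    have hδ : 0 < δ := hpos tm (hIccU htm).1 (hIccU htm).2
    have hhδ : ∀ t ∈ Icc s₀ c, δ ≤ h t := fun t ht => htmin ht
    obtain ⟨tM, htM, htMax⟩ := isCompact_Icc.exists_isMaxOn (nonempty_Icc.2 hcs₀)
      (((hC1.continuousOn).mono hIccU).abs)
    set H := |h tM| with hHdef
    have hHb : ∀ t ∈ Icc s₀ c, |h t| ≤ H := fun t ht => htMax ht
    have hH0 : 0 ≤ H := le_trans (abs_nonneg (h s₀)) (hHb s₀ ⟨le_refl _, hcs₀⟩)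
    set m := min w₀ 0 - 1 with hmdef
    set M := max w₀ (1/δ) + 1 with hMdef
    -- choose solutions below c
    have hSex : ∀ T : ℝ, s₀ ≤ T → T < c → ∃ ε f, 0 < ε ∧ Ioo (s₀ - ε) (T + ε) ⊆ U ∧
        (f : ℝ → ℝ) s₀ = w₀ ∧ ∀ t ∈ Ioo (s₀ - ε) (T + ε), HasDerivAt f (RicField h t (f t)) t := by
      intro T h1 h2
      obtain ⟨_, _, ε, hε, hsub, f, hf0, hf'⟩ := hbelow T h1 h2
      exact ⟨ε, f, hε, hsub, hf0, hf'⟩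
    choose! ε F hp1 hp2 hp3 hp4 using hSex
    have hεs₀ := hp1 s₀ (le_refl _) hs₀c
    -- pairwise agreement
    have agree : ∀ T T', s₀ ≤ T → T < c → s₀ ≤ T' → T' < c →
        ∀ t, s₀ - min (ε T) (ε T') < t → t < min (T + ε T) (T' + ε T') → F T t = F T' t := by
      intro T T' h1 h2 h3 h4 t ht1 ht2
      have he1 := hp1 T h1 h2
      have he2 := hp1 T' h3 h4
      set I := Ioo (s₀ - min (ε T) (ε T')) (min (T + ε T) (T' + ε T')) with hIdef
      have hIsub : I ⊆ Ioo (s₀ - ε T) (T + ε T) := fun u hu =>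
        ⟨by have := min_le_left (ε T) (ε T'); cases hu; linarith,
         lt_of_lt_of_le hu.2 (min_le_left _ _)⟩
      have hIsub' : I ⊆ Ioo (s₀ - ε T') (T' + ε T') := fun u hu =>
        ⟨by have := min_le_right (ε T) (ε T'); cases hu; linarith,
         lt_of_lt_of_le hu.2 (min_le_right _ _)⟩
      have hs₀I : s₀ ∈ I := ⟨by have := lt_min he1 he2; linarith,
        lt_min (by linarith) (by linarith)⟩
      exact good_uniq isPreconnected_Ioo isOpen_Ioo
        (fun u hu => hcontU u (hp2 T h1 h2 (hIsub hu)))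
        (fun u hu => hp4 T h1 h2 u (hIsub hu))
        (fun u hu => hp4 T' h3 h4 u (hIsub' hu))
        hs₀I (by rw [hp3 T h1 h2, hp3 T' h3 h4]) ⟨ht1, ht2⟩
    -- the patched solution below c
    set W₀ : ℝ → ℝ := fun t => if t < s₀ then F s₀ t else if t < c then F t t else 0 with hW₀def
    have W1 : ∀ T, s₀ ≤ T → T < c → ∀ t, s₀ - min (ε s₀) (ε T) < t → t ≤ T → W₀ t = F T t := by
      intro T h1 h2 t ht1 ht2
      have heT := hp1 T h1 h2
      by_cases hts : t < s₀
      · rw [hW₀def]; simp only [if_pos hts]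
        exact agree s₀ T (le_refl _) hs₀c h1 h2 t ht1
          (lt_min (by linarith) (by linarith))
      · push_neg at hts
        have htc : t < c := lt_of_le_of_lt ht2 h2
        have het := hp1 t hts htc
        rw [hW₀def]; simp only [if_neg (not_lt.2 hts), if_pos htc]
        exact agree t T hts htc h1 h2 t
          (by have := lt_min het heT; linarith) (lt_min (by linarith) (by linarith))
    have W2 : ∀ t, s₀ - ε s₀ < t → t < c → HasDerivAt W₀ (RicField h t (W₀ t)) t := by
      intro t ht1 ht2
      by_cases hts : t < s₀
      · have hev : ∀ᶠ u in 𝓝 t, W₀ u = F s₀ u := by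
          filter_upwards [Iio_mem_nhds hts] with u (hu : u < s₀)
          rw [hW₀def]; simp only [if_pos hu]
        have hd := hp4 s₀ (le_refl _) hs₀c t ⟨ht1, by linarith⟩
        have hev' : W₀ =ᶠ[𝓝 t] F s₀ := hev
        rw [hev.self_of_nhds, hev'.hasDerivAt_iff]
        exact hd
      · push_neg at hts
        set T := (t + c)/2 with hTdef
        have h1 : s₀ ≤ T := by rw [hTdef]; linarith
        have h2 : T < c := by rw [hTdef]; linarith
        have h3 : t < T := by rw [hTdef]; linarith
        have heT := hp1 T h1 h2
        have hev : ∀ᶠ u in 𝓝 t, W₀ u = F T u := by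
          filter_upwards [Ioo_mem_nhds (show s₀ - min (ε s₀) (ε T) < t by
            have := lt_min hεs₀ heT; linarith) h3] with u hu
          exact W1 T h1 h2 u hu.1 hu.2.le
        have hd := hp4 T h1 h2 t ⟨by linarith, by linarith⟩
        have hev' : W₀ =ᶠ[𝓝 t] F T := hev
        rw [hev.self_of_nhds, hev'.hasDerivAt_iff]
        exact hd
    have W3 : ∀ t, s₀ ≤ t → t < c → m ≤ W₀ t ∧ W₀ t ≤ M := by
      intro t h1 h2
      have het := hp1 t h1 h2
      have hap := apriori hδ (fun u hu => hhδ u ⟨hu.1, le_trans hu.2 h2.le⟩) (hp3 t h1 h2)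
        (fun u hu => hp4 t h1 h2 u ⟨by linarith [hu.1], by linarith [hu.2]⟩) t ⟨h1, le_refl t⟩
      rw [W1 t h1 h2 t (by have := lt_min hεs₀ het; linarith) (le_refl t)]
      exact hap
    -- Lipschitz bound
    set Q := max |m| |M| with hQdef
    have hQ0 : 0 ≤ Q := le_trans (abs_nonneg m) (le_max_left _ _)
    set C₀ := (1 + Q^2) * (1 + H * Q) with hC₀def
    have hC₀0 : (0:ℝ) ≤ C₀ := by positivity
    have hvb : ∀ t, s₀ ≤ t → t < c → ‖RicField h t (W₀ t)‖₊ ≤ Real.toNNReal C₀ := by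
      intro t h1 h2
      obtain ⟨hm1, hM1⟩ := W3 t h1 h2
      rw [← NNReal.coe_le_coe, coe_nnnorm, Real.coe_toNNReal _ hC₀0]
      have hQt : |W₀ t| ≤ Q := by
        rw [abs_le]
        constructor
        · calc -Q ≤ -|m| := by simp [hQdef, le_max_left]
            _ ≤ m := neg_abs_le m
            _ ≤ W₀ t := hm1
        · calc W₀ t ≤ M := hM1
            _ ≤ |M| := le_abs_self M
            _ ≤ Q := le_max_right _ _
      have hht : |h t| ≤ H := hHb t ⟨h1, h2.le⟩
      show |(1 + W₀ t ^ 2) * (1 - h t * W₀ t)| ≤ C₀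
      rw [abs_mul, hC₀def]
      have e1 : |1 + W₀ t ^ 2| = 1 + W₀ t ^ 2 := abs_of_pos (by positivity)
      have e2 : W₀ t ^ 2 ≤ Q ^ 2 := by nlinarith [abs_nonneg (W₀ t), sq_abs (W₀ t)]
      have e3 : |1 - h t * W₀ t| ≤ 1 + H * Q := by
        calc |1 - h t * W₀ t| ≤ |(1:ℝ)| + |h t * W₀ t| := abs_sub _ _
          _ = 1 + |h t| * |W₀ t| := by rw [abs_one, abs_mul]
          _ ≤ 1 + H * Q := by nlinarith [abs_nonneg (h t), abs_nonneg (W₀ t)]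
      rw [e1]
      nlinarith [abs_nonneg (1 - h t * W₀ t), sq_nonneg (W₀ t)]
    have hlipW : LipschitzOnWith (Real.toNNReal C₀) W₀ (Ico s₀ c) :=
      (convex_Ico s₀ c).lipschitzOnWith_of_nnnorm_hasDerivWithin_le
        (f' := fun t => RicField h t (W₀ t))
        (fun t ht => ((W2 t (by linarith [ht.1]) ht.2).hasDerivWithinAt))
        (fun t ht => hvb t ht.1 ht.2)
    obtain ⟨Wt, hWtlip, hWteq⟩ := hlipW.extend_real
    set L := Wt c with hLdef
    have hWlim : Tendsto W₀ (𝓝[<] c) (𝓝 L) := by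
      have h1 : Tendsto Wt (𝓝[<] c) (𝓝 L) :=
        (hWtlip.continuous.tendsto c).mono_left nhdsWithin_le_nhds
      apply h1.congr'
      filter_upwards [Ioo_mem_nhdsLT_of_mem (⟨hs₀c, le_refl c⟩ : c ∈ Ioc s₀ c)] with u hu
      exact (hWteq ⟨hu.1.le, hu.2⟩).symm
    obtain ⟨εg, hεg, hsubg, g, hg0, hg'⟩ := loc_ex hUo hC1 (hIccU ⟨hcs₀, le_refl c⟩) (x₀ := L)
    set G : ℝ → ℝ := fun t => if t < c then W₀ t else g t with hGdef
    have hGc : G c = L := by rw [hGdef]; simp [lt_irrefl, hg0]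
    have hGd1 : ∀ t, s₀ - ε s₀ < t → t < c → HasDerivAt G (RicField h t (G t)) t := by
      intro t h1 h2
      have hev : ∀ᶠ u in 𝓝 t, G u = W₀ u := by
        filter_upwards [Iio_mem_nhds h2] with u (hu : u < c)
        rw [hGdef]; simp only [if_pos hu]
      have hev' : G =ᶠ[𝓝 t] W₀ := hev
      rw [hev.self_of_nhds, hev'.hasDerivAt_iff]
      exact W2 t h1 h2
    have hGIic : HasDerivWithinAt G (RicField h c L) (Iic c) c := by
      apply hasDerivWithinAt_Iic_of_tendsto_deriv (s := Ioo s₀ c)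
      · intro u hu
        exact ((hGd1 u (by linarith [hu.1]) hu.2).differentiableAt).differentiableWithinAt
      · have h2 : Tendsto G (𝓝[Ioo s₀ c] c) (𝓝 L) := by
          apply (hWlim.mono_left (nhdsWithin_mono _ Ioo_subset_Iio_self)).congr'
          filter_upwards [self_mem_nhdsWithin] with u hu
          rw [hGdef]; simp only [if_pos hu.2]
        show ContinuousWithinAt G (Ioo s₀ c) c
        unfold ContinuousWithinAt
        rw [hGc]
        exact h2
      · exact Ioo_mem_nhdsLT_of_mem ⟨hs₀c, le_refl c⟩
      · have hder : ∀ᶠ u in 𝓝[<] c, RicField h u (W₀ u) = deriv G u := by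
          filter_upwards [Ioo_mem_nhdsLT_of_mem
            (⟨by linarith, le_refl c⟩ : c ∈ Ioc (s₀ - ε s₀) c)] with u hu
          have hd := hGd1 u hu.1 hu.2
          rw [hd.deriv, hGdef]
          simp only [if_pos hu.2]
        apply Tendsto.congr' hder
        have hhc : Tendsto h (𝓝[<] c) (𝓝 (h c)) :=
          ((hcontU c (hIccU ⟨hcs₀, le_refl c⟩)).tendsto).mono_left nhdsWithin_le_nhds
        show Tendsto (fun u => (1 + W₀ u ^ 2) * (1 - h u * W₀ u)) (𝓝[<] c)
          (𝓝 ((1 + L ^ 2) * (1 - h c * L)))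
        exact (tendsto_const_nhds.add (hWlim.pow 2)).mul
          (tendsto_const_nhds.sub (hhc.mul hWlim))
    have hGIci : HasDerivWithinAt G (RicField h c L) (Ici c) c := by
      have hgc : HasDerivAt g (RicField h c (g c)) c := hg' c ⟨by linarith, by linarith⟩
      rw [hg0] at hgc
      apply (hgc.hasDerivWithinAt).congr
      · intro u hu
        rcases eq_or_lt_of_le (mem_Ici.mp hu) with he | hlt
        · rw [← he, hGc, hg0]
        · rw [hGdef]; simp only [if_neg (not_lt.2 hlt.le)]
      · rw [hGc, hg0]
    have hGcd : HasDerivAt G (RicField h c (G c)) c := by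
      rw [hGc]
      have h2 := hGIic.union hGIci
      rw [Iic_union_Ici, hasDerivWithinAt_univ] at h2
      exact h2
    have hGd2 : ∀ t, c < t → t < c + εg → HasDerivAt G (RicField h t (G t)) t := by
      intro t h1 h2
      have hev : ∀ᶠ u in 𝓝 t, G u = g u := by
        filter_upwards [Ioi_mem_nhds h1] with u (hu : c < u)
        rw [hGdef]; simp only [if_neg (not_lt.2 hu.le)]
      have hev' : G =ᶠ[𝓝 t] g := hev
      rw [hev.self_of_nhds, hev'.hasDerivAt_iff]
      exact hg' t ⟨by linarith, h2⟩
    set ε' := min (ε s₀) εg / 2 with hε'def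
    have hε'pos : 0 < ε' := by
      rw [hε'def]; have := lt_min hεs₀ hεg; positivity
    have hε'1 : ε' ≤ ε s₀ / 2 := by
      rw [hε'def]; have := min_le_left (ε s₀) εg; linarith
    have hε'2 : ε' ≤ εg / 2 := by
      rw [hε'def]; have := min_le_right (ε s₀) εg; linarith
    set Tstar := c + ε' with hTstardef
    have hTstarU : Tstar ∈ U := hsubg ⟨by linarith, by linarith⟩
    have hGs₀ : G s₀ = w₀ := by
      rw [hGdef]; simp only [if_pos hs₀c]
      rw [hW₀def]; simp only [lt_irrefl, if_neg (lt_irrefl s₀), if_pos hs₀c]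
      exact hp3 s₀ (le_refl _) hs₀c
    have hTS : Tstar ∈ S := by
      refine ⟨by linarith, hTstarU.2, ε', hε'pos, ?_, G, hGs₀, ?_⟩
      · intro u hu
        by_cases hu1 : u ≤ s₀
        · exact hp2 s₀ (le_refl _) hs₀c ⟨by linarith [hu.1], by linarith⟩
        · push_neg at hu1
          by_cases hu2 : u ≤ c
          · exact hIccU ⟨hu1.le, hu2⟩
          · push_neg at hu2
            exact hsubg ⟨by linarith, by linarith [hu.2]⟩
      · intro t ht
        rcases lt_trichotomy t c with h1 | h1 | h1
        · exact hGd1 t (by linarith [ht.1]) h1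
        · rw [h1]; exact hGcd
        · exact hGd2 t h1 (by linarith [ht.2])
    obtain ⟨T', hT'C, hT'lt⟩ := exists_lt_of_csInf_lt hCne (show sInf Cset < Tstar by
      rw [← hcdef]; linarith)
    exact hT'C.2.2 (down Tstar T' hTS hT'C.1 hT'lt.le)
  -- FINAL ASSEMBLY
  have hSex2 : ∀ T : ℝ, s₀ ≤ T → (T : EReal) < b → ∃ ε f, 0 < ε ∧
      Ioo (s₀ - ε) (T + ε) ⊆ U ∧ (f : ℝ → ℝ) s₀ = w₀ ∧
      ∀ t ∈ Ioo (s₀ - ε) (T + ε), HasDerivAt f (RicField h t (f t)) t := by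
    intro T h1 h2
    obtain ⟨_, _, ε, hε, hsub, f, hf0, hf'⟩ := key T h1 h2
    exact ⟨ε, f, hε, hsub, hf0, hf'⟩
  choose! ε F hp1 hp2 hp3 hp4 using hSex2
  have hεs₀ := hp1 s₀ (le_refl _) hs₀b
  have agree : ∀ T T', s₀ ≤ T → (T : EReal) < b → s₀ ≤ T' → (T' : EReal) < b →
      ∀ t, s₀ - min (ε T) (ε T') < t → t < min (T + ε T) (T' + ε T') → F T t = F T' t := by
    intro T T' h1 h2 h3 h4 t ht1 ht2
    have he1 := hp1 T h1 h2
    have he2 := hp1 T' h3 h4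
    set I := Ioo (s₀ - min (ε T) (ε T')) (min (T + ε T) (T' + ε T')) with hIdef
    have hIsub : I ⊆ Ioo (s₀ - ε T) (T + ε T) := fun u hu =>
      ⟨by have := min_le_left (ε T) (ε T'); cases hu; linarith,
        lt_of_lt_of_le hu.2 (min_le_left _ _)⟩
    have hIsub' : I ⊆ Ioo (s₀ - ε T') (T' + ε T') := fun u hu =>
      ⟨by have := min_le_right (ε T) (ε T'); cases hu; linarith,
        lt_of_lt_of_le hu.2 (min_le_right _ _)⟩
    have hs₀I : s₀ ∈ I := ⟨by have := lt_min he1 he2; linarith,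
      lt_min (by linarith) (by linarith)⟩
    exact good_uniq isPreconnected_Ioo isOpen_Ioo
      (fun u hu => hcontU u (hp2 T h1 h2 (hIsub hu)))
      (fun u hu => hp4 T h1 h2 u (hIsub hu))
      (fun u hu => hp4 T' h3 h4 u (hIsub' hu))
      hs₀I (by rw [hp3 T h1 h2, hp3 T' h3 h4]) ⟨ht1, ht2⟩
  set ρ := ε s₀ / 2 with hρdef
  have haρ : a < s₀ - ρ := by
    have h1 : a ≤ s₀ - ε s₀ := by
      by_contra hcon2
      push_neg at hcon2
      have h2 : (s₀ - ε s₀ + a)/2 ∈ U := hp2 s₀ (le_refl _) hs₀b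
        ⟨by linarith, by linarith⟩
      have h3 : a < (s₀ - ε s₀ + a)/2 ∧ ((s₀ - ε s₀ + a)/2 : EReal) < b := h2
      linarith [h3.1]
    rw [hρdef]; linarith
  set w : ℝ → ℝ := fun t => if t ≤ s₀ then F s₀ t else if (t : EReal) < b then F t t else 0
    with hwdef
  have hws₀ : w s₀ = w₀ := by
    rw [hwdef]; simp only [le_refl, if_pos]
    exact hp3 s₀ (le_refl _) hs₀b
  refine ⟨ρ, by rw [hρdef]; linarith, haρ, w, hws₀, ?_⟩
  intro s hs1 hs2
  by_cases hss : s < s₀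
  · have hev : ∀ᶠ u in 𝓝 s, w u = F s₀ u := by
      filter_upwards [Iio_mem_nhds hss] with u (hu : u < s₀)
      rw [hwdef]; simp only [if_pos hu.le]
    have hev' : w =ᶠ[𝓝 s] F s₀ := hev
    rw [hev.self_of_nhds, hev'.hasDerivAt_iff]
    exact hp4 s₀ (le_refl _) hs₀b s ⟨by rw [hρdef] at hs1; linarith, by linarith⟩
  · push_neg at hss
    obtain ⟨T', hT'1, hT'2⟩ := ereal_next hs2
    have hT's₀ : s₀ ≤ T' := le_trans hss hT'1.le
    have heT' := hp1 T' hT's₀ hT'2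
    have hev : ∀ᶠ u in 𝓝 s, w u = F T' u := by
      filter_upwards [Ioo_mem_nhds (show s₀ - min (ε s₀) (ε T') < s by
        have := lt_min hεs₀ heT'; linarith) hT'1] with u hu
      by_cases hu1 : u ≤ s₀
      · rw [hwdef]; simp only [if_pos hu1]
        exact agree s₀ T' (le_refl _) hs₀b hT's₀ hT'2 u hu.1
          (lt_min (by linarith) (by linarith [hu.2]))
      · push_neg at hu1
        have hub : (u : EReal) < b := lt_trans (EReal.coe_lt_coe_iff.2 hu.2) hT'2
        have heu := hp1 u hu1.le hub
        rw [hwdef]; simp only [if_neg (not_le.2 hu1), if_pos hub]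
        exact agree u T' hu1.le hub hT's₀ hT'2 u
          (by have := lt_min heu heT'; linarith)
          (lt_min (by linarith) (by linarith [hu.2]))
    have hev' : w =ᶠ[𝓝 s] F T' := hev
    rw [hev.self_of_nhds, hev'.hasDerivAt_iff]
    exact hp4 T' hT's₀ hT'2 s ⟨by linarith, by linarith⟩

/-- A solution of `w' = (1 + w²)(1 − h w)` with `w(s₀) = w₀` on the interval
`(s₀ − ρ, b)` (with `b` possibly `+∞`). -/
def IsSolOnLeftNbhd (b : EReal) (h : ℝ → ℝ) (s₀ ρ w₀ : ℝ) (w : ℝ → ℝ) : Prop :=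
  ContDiffOn ℝ 2 w {s : ℝ | s₀ - ρ < s ∧ (s : EReal) < b} ∧
  w s₀ = w₀ ∧
  ∀ s : ℝ, s₀ - ρ < s → (s : EReal) < b →
    HasDerivAt w ((1 + w s ^ 2) * (1 - h s * w s)) s

/-- Under hypothesis (H) (`h ∈ C¹(a,b)`, `h > 0`), for each `w₀` the
initial value problem `w' = (1 + w²)(1 − h w)`, `w(s₀) = w₀` has a `C²` solution on
`(s₀ − ρ, b)` for some `ρ > 0`, and any two such solutions agree on the intersection
of their domains. -/
theorem extension_of_solutions_positive_h
    (a : ℝ) (b : EReal) (hab : (a : EReal) < b)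
    (s₀ : ℝ) (hs₀ : a < s₀ ∧ (s₀ : EReal) < b)
    (h : ℝ → ℝ)
    (hC1 : ContDiffOn ℝ 1 h {s : ℝ | a < s ∧ (s : EReal) < b})
    (hpos : ∀ s : ℝ, a < s → (s : EReal) < b → 0 < h s) :
    ∀ w₀ : ℝ,
      (∃ ρ : ℝ, 0 < ρ ∧ a < s₀ - ρ ∧
        ∃ w : ℝ → ℝ, IsSolOnLeftNbhd b h s₀ ρ w₀ w) ∧
      (∀ ρ₁ ρ₂ : ℝ, 0 < ρ₁ → 0 < ρ₂ → ∀ w₁ w₂ : ℝ → ℝ,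
        IsSolOnLeftNbhd b h s₀ ρ₁ w₀ w₁ → IsSolOnLeftNbhd b h s₀ ρ₂ w₀ w₂ →
        ∀ s : ℝ, s₀ - ρ₁ < s → s₀ - ρ₂ < s → (s : EReal) < b → w₁ s = w₂ s) := by
  intro w₀
  have hUo : IsOpen {s : ℝ | a < s ∧ (s : EReal) < b} := by
    have h1 : {s : ℝ | a < s ∧ (s : EReal) < b} = Ioi a ∩ {s : ℝ | (s : EReal) < b} := by
      ext t; simp only [mem_Ioi, mem_inter_iff, mem_setOf_eq]
    rw [h1]; exact isOpen_Ioi.inter (ereal_open b)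
  constructor
  · -- EXISTENCE
    obtain ⟨ρ, hρ, haρ, w, hw0, hwd⟩ := global_ex hs₀.1 hs₀.2 hC1 hpos (w₀ := w₀)
    set D : Set ℝ := {s : ℝ | s₀ - ρ < s ∧ (s : EReal) < b} with hDdef
    have hDo : IsOpen D := by
      have h1 : D = Ioi (s₀ - ρ) ∩ {s : ℝ | (s : EReal) < b} := by
        ext t; simp only [hDdef, mem_Ioi, mem_inter_iff, mem_setOf_eq]
      rw [h1]; exact isOpen_Ioi.inter (ereal_open b)
    have hDU : D ⊆ {s : ℝ | a < s ∧ (s : EReal) < b} := fun s hs =>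
      ⟨lt_trans haρ hs.1, hs.2⟩
    have hder : ∀ s ∈ D, HasDerivAt w (RicField h s (w s)) s := fun s hs => hwd s hs.1 hs.2
    have hdiff : DifferentiableOn ℝ w D := fun s hs =>
      ((hder s hs).differentiableAt).differentiableWithinAt
    have hdeq : ∀ s ∈ D, deriv w s = RicField h s (w s) := fun s hs => (hder s hs).deriv
    have hcw : ContinuousOn w D := hdiff.continuousOn
    have hC1D : ContDiffOn ℝ 1 h D := hC1.mono hDU
    have hC1w : ContDiffOn ℝ 1 w D := by
      rw [show (1 : WithTop ℕ∞) = 0 + 1 by norm_num, contDiffOn_succ_iff_deriv_of_isOpen hDo]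
      refine ⟨hdiff, by simp, ?_⟩
      rw [contDiffOn_zero]
      apply ContinuousOn.congr ?_ hdeq
      show ContinuousOn (fun s => (1 + w s ^ 2) * (1 - h s * w s)) D
      exact (continuousOn_const.add (hcw.pow 2)).mul
        (continuousOn_const.sub ((hC1D.continuousOn).mul hcw))
    have hC2w : ContDiffOn ℝ 2 w D := by
      rw [show (2 : WithTop ℕ∞) = 1 + 1 by norm_num, contDiffOn_succ_iff_deriv_of_isOpen hDo]
      refine ⟨hdiff, by simp, ?_⟩
      apply ContDiffOn.congr ?_ hdeq
      show ContDiffOn ℝ 1 (fun s => (1 + w s ^ 2) * (1 - h s * w s)) D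
      exact (contDiffOn_const.add (hC1w.pow 2)).mul
        (contDiffOn_const.sub (hC1D.mul hC1w))
    exact ⟨ρ, hρ, haρ, w, hC2w, hw0, fun s h1 h2 => hder s ⟨h1, h2⟩⟩
  · -- UNIQUENESS
    intro ρ₁ ρ₂ hρ₁ hρ₂ w₁ w₂ hsol₁ hsol₂ s h1 h2 h3
    set I : Set ℝ := {t : ℝ | max (s₀ - ρ₁) (s₀ - ρ₂) < t ∧ (t : EReal) < b} with hIdef
    have hIo : IsOpen I := by
      have he : I = Ioi (max (s₀ - ρ₁) (s₀ - ρ₂)) ∩ {s : ℝ | (s : EReal) < b} := by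
        ext t; simp only [hIdef, mem_Ioi, mem_inter_iff, mem_setOf_eq]
      rw [he]; exact isOpen_Ioi.inter (ereal_open b)
    have hIpre : IsPreconnected I := by
      apply Set.OrdConnected.isPreconnected
      constructor
      intro x hx y hy z hz
      exact ⟨lt_of_lt_of_le hx.1 hz.1, lt_of_le_of_lt (EReal.coe_le_coe_iff.2 hz.2) hy.2⟩
    have hd₁ : ∀ t ∈ I, HasDerivAt w₁ (RicField h t (w₁ t)) t := fun t ht =>
      hsol₁.2.2 t (lt_of_le_of_lt (le_max_left _ _) ht.1) ht.2
    have hd₂ : ∀ t ∈ I, HasDerivAt w₂ (RicField h t (w₂ t)) t := fun t ht =>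
      hsol₂.2.2 t (lt_of_le_of_lt (le_max_right _ _) ht.1) ht.2
    have hs₀I : s₀ ∈ I := ⟨max_lt (by linarith) (by linarith), hs₀.2⟩
    have heqs₀ : w₁ s₀ = w₂ s₀ := by rw [hsol₁.2.1, hsol₂.2.1]
    have hloc : ∀ c ∈ I, w₁ c = w₂ c → w₁ =ᶠ[𝓝 c] w₂ := by
      intro c hc hceq
      have hev₁ : ∀ᶠ u in 𝓝 c, HasDerivAt w₁ (RicField h u (w₁ u)) u := by
        filter_upwards [hIo.mem_nhds hc] with u hu; exact hd₁ u hu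
      have hev₂ : ∀ᶠ u in 𝓝 c, HasDerivAt w₂ (RicField h u (w₂ u)) u := by
        filter_upwards [hIo.mem_nhds hc] with u hu; exact hd₂ u hu
      by_cases hca : a < c
      · exact loc_uniq hev₁ hev₂
          (hbound_of_continuousAt ((hC1.continuousOn).continuousAt
            (hUo.mem_nhds ⟨hca, hc.2⟩))) hceq
      · -- c ≤ a : use C² regularity of w₁
        have hD₁o : IsOpen {t : ℝ | s₀ - ρ₁ < t ∧ (t : EReal) < b} := by
          have he : {t : ℝ | s₀ - ρ₁ < t ∧ (t : EReal) < b}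
              = Ioi (s₀ - ρ₁) ∩ {s : ℝ | (s : EReal) < b} := by
            ext t; simp only [mem_Ioi, mem_inter_iff, mem_setOf_eq]
          rw [he]; exact isOpen_Ioi.inter (ereal_open b)
        have hcD₁ : c ∈ {t : ℝ | s₀ - ρ₁ < t ∧ (t : EReal) < b} :=
          ⟨lt_of_le_of_lt (le_max_left _ _) hc.1, hc.2⟩
        have hC2At : ContDiffAt ℝ 2 w₁ c := (hsol₁.1).contDiffAt (hD₁o.mem_nhds hcD₁)
        exact loc_uniq hev₁ hev₂ (hbound_of_sol hev₁ hC2At) hceq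
    have := eqOn_of_loc hIpre hIo
      (fun t ht => ((hd₁ t ht).continuousAt).continuousWithinAt)
      (fun t ht => ((hd₂ t ht).continuousAt).continuousWithinAt)
      hloc hs₀I heqs₀
    exact this ⟨max_lt h1 h2, h3⟩

end
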